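/- With the tensor-train projection setup (tensor A ∈ ℝ^{I₁×⋯×I_N}, orthonormal matrices Q₁,…,Q_{N−1}, and the recursively defined matrices A₁,…,A_{N−1}), for every n = 1,…,N−1 and every integer μ ≥ 0, the singular values satisfy Σ_{i=μ+1}^{min(μ_{n−1}I_n, I_{n+1}⋯I_N)} σ_i(A_n)² ≤ Σ_{i=μ+1}^{min(I₁⋯I_n, I_{n+1}⋯I_N)} σ_i(A_{([n])})², i.e., Δ_{μ+1}(A_n) ≤ Δ_{μ+1}(A_{([n])}). -/

import Mathlib

open Matrix
open scoped BigOperators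

noncomputable section

/-- Frobenius norm of a real matrix. -/
def frobNorm {m n : ℕ} (A : Matrix (Fin m) (Fin n) ℝ) : ℝ :=
  Real.sqrt (∑ i, ∑ j, A i j ^ 2)

/-- Nonincreasing rearrangement of a finite tuple of reals. -/
def sortedDesc {n : ℕ} (f : Fin n → ℝ) : Fin n → ℝ :=
  fun k => - ((fun i => - f i) ∘ Tuple.sort (fun i => - f i)) k

/-- `sval A k` is the `(k+1)`-st largest singular value of `A` (i.e. 0-based index `k`),
the square root of the `(k+1)`-st largest eigenvalue of `AᵀA`; it is `0` for `k ≥ n`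
(in particular for `k ≥ min m n`). -/
def sval {m n : ℕ} (A : Matrix (Fin m) (Fin n) ℝ) (k : ℕ) : ℝ :=
  if h : k < n then
    Real.sqrt (sortedDesc (Matrix.isHermitian_conjTranspose_mul_self A).eigenvalues ⟨k, h⟩)
  else 0

/-- Spectral norm (ℓ²→ℓ² operator norm) of a real matrix: its largest singular value. -/
def specNorm {m n : ℕ} (A : Matrix (Fin m) (Fin n) ℝ) : ℝ := sval A 0

/-- `tailDelta A μ = Δ_{μ+1}(A) = sqrt (Σ_{k=μ+1}^{min(m,n)} σ_k(A)²)` (with 1-based σ's,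
so 0-based indices `μ, …, min m n - 1`). -/
def tailDelta {m n : ℕ} (A : Matrix (Fin m) (Fin n) ℝ) (μ : ℕ) : ℝ :=
  Real.sqrt (∑ k ∈ Finset.Ico μ (min m n), sval A k ^ 2)

end

noncomputable section

/-- Value of a dependent tuple at a natural-number position (`0` out of range). -/
def pv {N : ℕ} {g : Fin N → ℕ} (x : (k : Fin N) → Fin (g k)) (k : ℕ) : ℕ :=
  if h : k < N then (x ⟨k, h⟩ : ℕ) else 0

/-- Mixed-radix (little-endian, MATLAB-style) linearization of the components `a, …, b-1`
(0-based) of a multi-index `x` of a tensor with dimensions `I 1, …, I N`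
(the 0-based component `k` has dimension `I (k+1)`):
`ttCode I x a b = Σ_{k∈[a,b)} x_k · Π_{t∈[a,k)} I (t+1)`. -/
def ttCode (I : ℕ → ℕ) {N : ℕ} (x : (k : Fin N) → Fin (I ((k : ℕ) + 1))) (a b : ℕ) : ℕ :=
  ∑ k ∈ Finset.Ico a b, pv x k * ∏ t ∈ Finset.Ico a k, I (t + 1)

/-- Frobenius norm of a tensor: square root of the sum of squares of all entries. -/
def tnorm {N : ℕ} {g : Fin N → ℕ} (T : ((k : Fin N) → Fin (g k)) → ℝ) : ℝ :=
  Real.sqrt (∑ x, T x ^ 2)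

/-- Entry of a matrix at natural-number positions (`0` out of range). -/
def matExt {p q : ℕ} (M : Matrix (Fin p) (Fin q) ℝ) (a b : ℕ) : ℝ :=
  if h : a < p ∧ b < q then M ⟨a, h.1⟩ ⟨b, h.2⟩ else 0

end
namespace TTaux
open Matrix Finset

lemma sortedDesc_apply {n : ℕ} (f : Fin n → ℝ) (k : Fin n) :
    sortedDesc f k = f (Tuple.sort (fun i => -f i) k) := by
  simp [sortedDesc]

lemma sortedDesc_antitone {n : ℕ} (f : Fin n → ℝ) : Antitone (sortedDesc f) := by
  intro i j hij
  have h := Tuple.monotone_sort (fun i => -f i) hij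
  simp only [Function.comp_apply] at h
  rw [sortedDesc_apply, sortedDesc_apply]
  linarith

/-- `evd hX k`: the `k`-th largest eigenvalue of `X` (0 out of range). -/
noncomputable def evd {q : ℕ} {X : Matrix (Fin q) (Fin q) ℝ} (hX : X.IsHermitian) (k : ℕ) : ℝ :=
  if h : k < q then sortedDesc hX.eigenvalues ⟨k, h⟩ else 0

lemma psdT {m q : ℕ} (A : Matrix (Fin m) (Fin q) ℝ) : (Aᵀ * A).PosSemidef := by
  have := Matrix.posSemidef_conjTranspose_mul_self A
  rwa [conjTranspose_eq_transpose_of_trivial] at this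

lemma evd_nonneg {q : ℕ} {X : Matrix (Fin q) (Fin q) ℝ} (hX : X.PosSemidef) (k : ℕ) :
    0 ≤ evd hX.1 k := by
  unfold evd
  split
  · rw [sortedDesc_apply]; exact hX.eigenvalues_nonneg _
  · exact le_refl 0

lemma sval_sq {m q : ℕ} (A : Matrix (Fin m) (Fin q) ℝ) (k : ℕ) :
    sval A k ^ 2 = evd (Matrix.isHermitian_conjTranspose_mul_self A) k := by
  unfold sval evd
  split
  · rw [Real.sq_sqrt]
    rw [sortedDesc_apply]
    exact (psdT A).eigenvalues_nonneg _
  · simp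

lemma map_val_filter {q : ℕ} (p : ℕ → Prop) [DecidablePred p] :
    (Finset.univ.filter (fun i : Fin q => p (i : ℕ))).map Fin.valEmbedding
      = (Finset.range q).filter p := by
  ext k
  simp only [Finset.mem_map, Finset.mem_filter, Finset.mem_univ, true_and, Fin.valEmbedding_apply,
    Finset.mem_range]
  constructor
  · rintro ⟨i, hp, rfl⟩; exact ⟨i.isLt, hp⟩
  · rintro ⟨hk, hp⟩; exact ⟨⟨k, hk⟩, hp, rfl⟩

lemma sum_filter_eq_sum_Ico {q : ℕ} (F : ℕ → ℝ) (μ : ℕ) :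
    ∑ i ∈ Finset.univ.filter (fun i : Fin q => μ ≤ (i : ℕ)), F (i : ℕ)
      = ∑ k ∈ Finset.Ico μ q, F k := by
  rw [show (∑ i ∈ Finset.univ.filter (fun i : Fin q => μ ≤ (i : ℕ)), F (i : ℕ))
      = ∑ k ∈ (Finset.univ.filter (fun i : Fin q => μ ≤ (i : ℕ))).map Fin.valEmbedding, F k
    from (Finset.sum_map _ Fin.valEmbedding F).symm, map_val_filter]
  congr 1
  ext k
  simp only [Finset.mem_filter, Finset.mem_range, Finset.mem_Ico]
  omega

lemma card_filter_le {q μ : ℕ} :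
    (Finset.univ.filter (fun i : Fin q => μ ≤ (i : ℕ))).card = q - μ := by
  have := congrArg Finset.card (map_val_filter (q := q) (fun k => μ ≤ k))
  rw [Finset.card_map] at this
  rw [this]
  have : (Finset.range q).filter (fun k => μ ≤ k) = Finset.Ico μ q := by
    ext k; simp only [Finset.mem_filter, Finset.mem_range, Finset.mem_Ico]; omega
  rw [this, Nat.card_Ico]

lemma sum_Ico_evd {q : ℕ} {X : Matrix (Fin q) (Fin q) ℝ} (hX : X.IsHermitian) (μ : ℕ) :
    ∑ k ∈ Finset.Ico μ q, evd hX k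
      = ∑ i ∈ Finset.univ.filter (fun i : Fin q => μ ≤ (i : ℕ)), sortedDesc hX.eigenvalues i := by
  rw [← sum_filter_eq_sum_Ico (fun k => evd hX k) μ]
  apply Finset.sum_congr rfl
  intro i _
  unfold evd
  rw [dif_pos i.isLt]

lemma rearrange {q : ℕ} (g t : Fin q → ℝ) (hg : Antitone g)
    (ht0 : ∀ i, 0 ≤ t i) (ht1 : ∀ i, t i ≤ 1) (s : ℕ) (hs : s ≤ q)
    (hsum : ∑ i, t i = (s : ℝ)) :
    ∑ i ∈ Finset.univ.filter (fun i : Fin q => q - s ≤ (i : ℕ)), g i ≤ ∑ i, g i * t i := by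
  set m := q - s with hm
  by_cases hs0 : s = 0
  · subst hs0
    have ht : ∀ i ∈ Finset.univ, t i = 0 := by
      intro i _
      have := (Finset.sum_eq_zero_iff_of_nonneg (fun i _ => ht0 i)).mp (by simpa using hsum)
      exact this i (Finset.mem_univ i)
    have h1 : (Finset.univ.filter (fun i : Fin q => q - 0 ≤ (i : ℕ))) = ∅ := by
      ext i; simp only [Finset.mem_filter, Finset.mem_univ, true_and, Finset.notMem_empty,
        iff_false]
      omega
    rw [h1]
    simp only [Finset.sum_empty]
    rw [Finset.sum_congr rfl (fun i hi => by rw [ht i hi, mul_zero])]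
    simp
  · have hmq : m < q := by omega
    set c := g ⟨m, hmq⟩ with hc
    set B := Finset.univ.filter (fun i : Fin q => m ≤ (i : ℕ)) with hB
    set Bc := Finset.univ.filter (fun i : Fin q => ¬ m ≤ (i : ℕ)) with hBc
    have hsplit : ∀ F : Fin q → ℝ, ∑ i ∈ B, F i + ∑ i ∈ Bc, F i = ∑ i, F i := by
      intro F
      exact Finset.sum_filter_add_sum_filter_not _ _ _
    have hcardB : (B.card : ℝ) = (s : ℝ) := by
      rw [hB, card_filter_le]
      norm_cast
      omega
    have e1 : ∑ i ∈ Bc, c * t i ≤ ∑ i ∈ Bc, g i * t i := by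
      apply Finset.sum_le_sum
      intro i hi
      simp only [hBc, Finset.mem_filter] at hi
      have : g ⟨m, hmq⟩ ≤ g i := hg (by simp [Fin.le_def]; omega)
      exact mul_le_mul_of_nonneg_right this (ht0 i)
    have e2 : ∑ i ∈ B, g i * (1 - t i) ≤ ∑ i ∈ B, c * (1 - t i) := by
      apply Finset.sum_le_sum
      intro i hi
      simp only [hB, Finset.mem_filter] at hi
      have : g i ≤ g ⟨m, hmq⟩ := hg (by simp [Fin.le_def]; omega)
      exact mul_le_mul_of_nonneg_right this (by linarith [ht1 i])
    have hBt : ∑ i ∈ Bc, t i = (s : ℝ) - ∑ i ∈ B, t i := by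
      have := hsplit t
      linarith [hsum]
    have hexp1 : ∑ i ∈ Bc, c * t i = c * ((s : ℝ) - ∑ i ∈ B, t i) := by
      rw [← Finset.mul_sum, hBt]
    have hexp2 : ∑ i ∈ B, c * (1 - t i) = c * ((s : ℝ) - ∑ i ∈ B, t i) := by
      rw [← Finset.mul_sum, Finset.sum_sub_distrib, Finset.sum_const, nsmul_eq_mul, mul_one,
        hcardB]
    have hexp3 : ∑ i ∈ B, g i * (1 - t i) = ∑ i ∈ B, g i - ∑ i ∈ B, g i * t i := by
      rw [← Finset.sum_sub_distrib]
      apply Finset.sum_congr rfl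
      intro i _
      ring
    have hfin := hsplit (fun i => g i * t i)
    linarith
end TTaux
namespace TTaux
open Matrix Finset

lemma star_eq_transpose' {n : ℕ} (A : Matrix (Fin n) (Fin n) ℝ) : star A = Aᵀ := by
  rw [Matrix.star_eq_conjTranspose, conjTranspose_eq_transpose_of_trivial]

lemma kyFan {q : ℕ} {X : Matrix (Fin q) (Fin q) ℝ} (hX : X.IsHermitian)
    (U : Matrix (Fin q) (Fin q) ℝ) (hU : Uᵀ * U = 1) (S : Finset (Fin q)) :
    ∑ i ∈ Finset.univ.filter (fun i : Fin q => q - S.card ≤ (i : ℕ)),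
        sortedDesc hX.eigenvalues i
      ≤ ∑ j ∈ S, (Uᵀ * X * U) j j := by
  classical
  set V : Matrix (Fin q) (Fin q) ℝ := (hX.eigenvectorUnitary : Matrix (Fin q) (Fin q) ℝ) with hV
  obtain ⟨hV1, hV2⟩ := Unitary.mem_iff.mp hX.eigenvectorUnitary.2
  rw [← hV] at hV1 hV2
  set C : Matrix (Fin q) (Fin q) ℝ := Vᵀ * U with hCdef
  have hstarV : star V = Vᵀ := star_eq_transpose' V
  have hC1 : Cᵀ * C = 1 := by
    have : Cᵀ = Uᵀ * V := by
      rw [hCdef, transpose_mul, transpose_transpose]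
    rw [this, hCdef, mul_assoc, ← mul_assoc V Vᵀ U, ← hstarV, hV2, one_mul, hU]
  have hC2 : C * Cᵀ = 1 := mul_eq_one_comm.mp hC1
  -- diagonalization of `Uᵀ X U`
  have hdiag : Uᵀ * X * U = Cᵀ * diagonal hX.eigenvalues * C := by
    have hsp := hX.spectral_theorem
    simp only [Unitary.conjStarAlgAut_apply, Unitary.coe_star] at hsp
    have hD : Matrix.diagonal (RCLike.ofReal ∘ hX.eigenvalues) = diagonal hX.eigenvalues := by
      rfl
    rw [hD, ← hV] at hsp
    conv_lhs => rw [hsp]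
    rw [hstarV]
    have hCT : Cᵀ = Uᵀ * V := by rw [hCdef, transpose_mul, transpose_transpose]
    rw [hCT, hCdef]
    noncomm_ring
  -- entries of the conjugated matrix
  have hentry : ∀ j : Fin q, (Uᵀ * X * U) j j
      = ∑ i, hX.eigenvalues i * (C i j)^2 := by
    intro j
    rw [hdiag, Matrix.mul_assoc, Matrix.mul_apply]
    apply Finset.sum_congr rfl
    intro i _
    rw [Matrix.transpose_apply, Matrix.mul_apply]
    rw [Finset.sum_eq_single i]
    · rw [Matrix.diagonal_apply_eq]; ring
    · intro b _ hb; rw [Matrix.diagonal_apply_ne' _ hb]; ring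
    · intro h; exact absurd (Finset.mem_univ i) h
  set t : Fin q → ℝ := fun i => ∑ j ∈ S, (C i j)^2 with ht
  have hswap : ∑ j ∈ S, (Uᵀ * X * U) j j = ∑ i, hX.eigenvalues i * t i := by
    rw [Finset.sum_congr rfl (fun j _ => hentry j), Finset.sum_comm]
    apply Finset.sum_congr rfl
    intro i _
    rw [ht, Finset.mul_sum]
  have ht0 : ∀ i, 0 ≤ t i := fun i => Finset.sum_nonneg (fun j _ => sq_nonneg _)
  have ht1 : ∀ i, t i ≤ 1 := by
    intro i
    have h1 : t i ≤ ∑ j, (C i j)^2 :=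
      Finset.sum_le_sum_of_subset_of_nonneg (Finset.subset_univ S)
        (fun j _ _ => sq_nonneg _)
    have h2 : ∑ j, (C i j)^2 = (C * Cᵀ) i i := by
      rw [Matrix.mul_apply]
      apply Finset.sum_congr rfl
      intro j _
      rw [Matrix.transpose_apply]; ring
    rw [h2, hC2] at h1
    simpa using h1
  have htsum : ∑ i, t i = (S.card : ℝ) := by
    rw [ht, Finset.sum_comm]
    have : ∀ j ∈ S, ∑ i, (C i j)^2 = 1 := by
      intro j _
      have h2 : ∑ i, (C i j)^2 = (Cᵀ * C) j j := by
        rw [Matrix.mul_apply]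
        apply Finset.sum_congr rfl
        intro i _
        rw [Matrix.transpose_apply]; ring
      rw [h2, hC1]
      simp
    rw [Finset.sum_congr rfl this]
    simp
  -- transfer to sorted eigenvalues
  set σ := Tuple.sort (fun i => -hX.eigenvalues i) with hσ
  have hperm : ∑ i, hX.eigenvalues i * t i
      = ∑ i, sortedDesc hX.eigenvalues i * t (σ i) := by
    rw [← Equiv.sum_comp σ (fun i => hX.eigenvalues i * t i)]
    apply Finset.sum_congr rfl
    intro i _
    rw [sortedDesc_apply]
  have htsum' : ∑ i, t (σ i) = (S.card : ℝ) := by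
    rw [Equiv.sum_comp σ t, htsum]
  have := rearrange (sortedDesc hX.eigenvalues) (fun i => t (σ i))
    (sortedDesc_antitone _) (fun i => ht0 _) (fun i => ht1 _) S.card
    (by simpa using Finset.card_le_univ S) htsum'
  rw [hswap, hperm]
  exact this

lemma psd_diag_nonneg {q : ℕ} {P : Matrix (Fin q) (Fin q) ℝ} (hP : P.PosSemidef) (j : Fin q) :
    0 ≤ P j j := by
  exact hP.diag_nonneg

lemma core {q : ℕ} {X Y : Matrix (Fin q) (Fin q) ℝ} (hX : X.PosSemidef) (hY : Y.IsHermitian)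
    (hYX : (Y - X).PosSemidef) (μ : ℕ) :
    ∑ k ∈ Finset.Ico μ q, evd hX.1 k ≤ ∑ k ∈ Finset.Ico μ q, evd hY k := by
  classical
  rcases le_or_gt q μ with hqμ | hμq
  · rw [Finset.Ico_eq_empty (by omega)]
    simp
  rw [sum_Ico_evd, sum_Ico_evd]
  set σY := Tuple.sort (fun i => -hY.eigenvalues i) with hσY
  set U : Matrix (Fin q) (Fin q) ℝ := (hY.eigenvectorUnitary : Matrix (Fin q) (Fin q) ℝ)
    with hUdef
  obtain ⟨hU1, hU2⟩ := Unitary.mem_iff.mp hY.eigenvectorUnitary.2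
  rw [← hUdef] at hU1 hU2
  have hstarU : star U = Uᵀ := star_eq_transpose' U
  have hUo : Uᵀ * U = 1 := by rw [← hstarU]; exact hU1
  set S : Finset (Fin q) := (Finset.univ.filter (fun i : Fin q => μ ≤ (i : ℕ))).map
    σY.toEmbedding with hS
  have hScard : S.card = q - μ := by rw [hS, Finset.card_map]; exact card_filter_le
  have hYdiag : Uᵀ * Y * U = diagonal hY.eigenvalues := by
    have h := hY.conjStarAlgAut_star_eigenvectorUnitary
    simp only [Unitary.conjStarAlgAut_star_apply, Unitary.coe_star] at h
    rw [← hUdef, hstarU] at h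
    exact h
  have hRHS : ∑ i ∈ Finset.univ.filter (fun i : Fin q => μ ≤ (i : ℕ)),
      sortedDesc hY.eigenvalues i = ∑ j ∈ S, (Uᵀ * Y * U) j j := by
    rw [hS, Finset.sum_map]
    apply Finset.sum_congr rfl
    intro i _
    rw [sortedDesc_apply, hYdiag]
    simp [Equiv.toEmbedding_apply]
    rfl
  have hKF := kyFan hX.1 U hUo S
  have hq : q - S.card = μ := by omega
  rw [hq] at hKF
  have hcomp : ∑ j ∈ S, (Uᵀ * X * U) j j ≤ ∑ j ∈ S, (Uᵀ * Y * U) j j := by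
    apply Finset.sum_le_sum
    intro j _
    have hP : (Uᵀ * (Y - X) * U).PosSemidef := by
      have := hYX.mul_mul_conjTranspose_same (Uᵀ)
      rwa [conjTranspose_eq_transpose_of_trivial, transpose_transpose] at this
    have := psd_diag_nonneg hP j
    have hexp : (Uᵀ * (Y - X) * U) j j = (Uᵀ * Y * U) j j - (Uᵀ * X * U) j j := by
      rw [Matrix.mul_sub, Matrix.sub_mul]
      simp [Matrix.sub_apply]
    linarith [hexp ▸ this]
  rw [hRHS]
  exact le_trans hKF hcomp

end TTaux
namespace TTaux
open Matrix Finset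

lemma evd_eq_zero_of_height_le {m q : ℕ} (A : Matrix (Fin m) (Fin q) ℝ) (k : ℕ)
    (hk : m ≤ k) : evd (Matrix.isHermitian_conjTranspose_mul_self A) k = 0 := by
  classical
  unfold evd
  split
  · next hkq =>
    set hH := Matrix.isHermitian_conjTranspose_mul_self A with hHdef
    set g := sortedDesc hH.eigenvalues with hg
    have hnn : ∀ i, 0 ≤ g i := by
      intro i
      rw [hg, sortedDesc_apply]
      exact (psdT A).eigenvalues_nonneg _
    by_contra hne
    have hpos : 0 < g ⟨k, hkq⟩ := lt_of_le_of_ne (hnn _) (Ne.symm hne)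
    -- the number of nonzero eigenvalues is at most m
    have hrank : (Aᵀ * A).rank ≤ m := by
      calc (Aᵀ * A).rank ≤ A.rank := Matrix.rank_mul_le_right _ _
        _ ≤ m := le_trans A.rank_le_card_height (by simp)
    have hcard : Fintype.card {i // hH.eigenvalues i ≠ 0} ≤ m := by
      rw [← hH.rank_eq_card_non_zero_eigs]
      exact hrank
    set σ := Tuple.sort (fun i => -hH.eigenvalues i) with hσ
    have hcard2 : Fintype.card {i : Fin q // g i ≠ 0} ≤ m := by
      have e : {i : Fin q // g i ≠ 0} ≃ {i : Fin q // hH.eigenvalues i ≠ 0} :=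
        σ.subtypeEquiv (fun i => by rw [hg, sortedDesc_apply])
      rw [Fintype.card_congr e]
      exact hcard
    have hsub : Finset.univ.filter (fun i : Fin q => (i : ℕ) ≤ k)
        ⊆ Finset.univ.filter (fun i : Fin q => g i ≠ 0) := by
      intro i hi
      simp only [Finset.mem_filter, Finset.mem_univ, true_and] at hi ⊢
      have : g ⟨k, hkq⟩ ≤ g i := sortedDesc_antitone _ (by simp [Fin.le_def]; omega)
      have : 0 < g i := lt_of_lt_of_le hpos this
      exact ne_of_gt this
    have hcard3 : (Finset.univ.filter (fun i : Fin q => (i : ℕ) ≤ k)).card = k + 1 := by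
      have := congrArg Finset.card (map_val_filter (q := q) (fun j => j ≤ k))
      rw [Finset.card_map] at this
      rw [this]
      have : (Finset.range q).filter (fun j => j ≤ k) = Finset.range (k + 1) := by
        ext j; simp only [Finset.mem_filter, Finset.mem_range]; omega
      rw [this, Finset.card_range]
    have hle := Finset.card_le_card hsub
    have h5 : (Finset.univ.filter (fun i : Fin q => g i ≠ 0)).card
        = Fintype.card {i : Fin q // g i ≠ 0} := (Fintype.card_subtype _).symm
    omega
  · rfl

/-- Main singular-value tail comparison: if `B = W * Bu` with `W * Wᵀ = 1`,
then the tails of `B` are dominated by those of `Bu`. -/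
lemma tail_le {m1 m2 q : ℕ} (B : Matrix (Fin m1) (Fin q) ℝ) (Bu : Matrix (Fin m2) (Fin q) ℝ)
    (W : Matrix (Fin m1) (Fin m2) ℝ) (hW : W * Wᵀ = 1) (hB : B = W * Bu) (μ : ℕ) :
    ∑ i ∈ Finset.Ico μ (min m1 q), sval B i ^ 2
      ≤ ∑ i ∈ Finset.Ico μ (min m2 q), sval Bu i ^ 2 := by
  classical
  have hXpsd : (Bᵀ * B).PosSemidef := psdT B
  have hYpsd : (Buᵀ * Bu).PosSemidef := psdT Bu
  have hsub : (Buᵀ * Bu - Bᵀ * B).PosSemidef := by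
    set P : Matrix (Fin m2) (Fin m2) ℝ := 1 - Wᵀ * W with hP
    have hPt : Pᵀ = P := by
      rw [hP, transpose_sub, transpose_one, transpose_mul, transpose_transpose]
    have hPP : P * P = P := by
      have h4 : (Wᵀ * W) * (Wᵀ * W) = Wᵀ * W := by
        rw [Matrix.mul_assoc, ← Matrix.mul_assoc W Wᵀ W, hW, Matrix.one_mul]
      rw [hP]
      simp only [Matrix.sub_mul, Matrix.mul_sub, Matrix.one_mul, Matrix.mul_one, h4]
      abel
    have e0 : (P * Bu)ᵀ * (P * Bu) = Buᵀ * P * Bu := by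
      rw [transpose_mul, hPt, Matrix.mul_assoc, ← Matrix.mul_assoc P P Bu, hPP,
        ← Matrix.mul_assoc]
    have hexp : Buᵀ * Bu - Bᵀ * B = (P * Bu)ᵀ * (P * Bu) := by
      rw [e0, hB, transpose_mul, hP]
      simp only [Matrix.mul_sub, Matrix.sub_mul, Matrix.mul_one, Matrix.one_mul,
        Matrix.mul_assoc]
    rw [hexp]
    exact psdT _
  calc ∑ i ∈ Finset.Ico μ (min m1 q), sval B i ^ 2
      = ∑ i ∈ Finset.Ico μ (min m1 q), evd hXpsd.1 i := by
        apply Finset.sum_congr rfl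
        intro i _
        exact sval_sq B i
    _ ≤ ∑ i ∈ Finset.Ico μ q, evd hXpsd.1 i := by
        apply Finset.sum_le_sum_of_subset_of_nonneg
        · apply Finset.Ico_subset_Ico le_rfl
          omega
        · intro i _ _
          exact evd_nonneg hXpsd i
    _ ≤ ∑ i ∈ Finset.Ico μ q, evd hYpsd.1 i := core hXpsd hYpsd.1 hsub μ
    _ = ∑ i ∈ Finset.Ico μ (min m2 q), evd hYpsd.1 i := by
        symm
        apply Finset.sum_subset
        · apply Finset.Ico_subset_Ico le_rfl; omega
        · intro k hk hnk
          simp only [Finset.mem_Ico] at hk hnk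
          have hm2k : m2 ≤ k := by omega
          exact evd_eq_zero_of_height_le Bu k hm2k
    _ = ∑ i ∈ Finset.Ico μ (min m2 q), sval Bu i ^ 2 := by
        apply Finset.sum_congr rfl
        intro i _
        exact (sval_sq Bu i).symm

/-- Tail of the zero matrix is zero. -/
lemma sval_zero_mat {m q : ℕ} (B : Matrix (Fin m) (Fin q) ℝ) (hB : B = 0) (k : ℕ) :
    sval B k = 0 := by
  classical
  unfold sval
  split
  · next h =>
    rw [sortedDesc_apply]
    have : (Matrix.isHermitian_conjTranspose_mul_self B).eigenvalues
        (Tuple.sort (fun i => -(Matrix.isHermitian_conjTranspose_mul_self B).eigenvalues i)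
          ⟨k, h⟩) = 0 := by
      set i := Tuple.sort (fun i => -(Matrix.isHermitian_conjTranspose_mul_self B).eigenvalues i)
          ⟨k, h⟩
      rw [Matrix.IsHermitian.eigenvalues_eq]
      rw [hB]
      simp
    rw [this, Real.sqrt_zero]
  · rfl

end TTaux
namespace TTaux
open Finset

lemma pos_of_lt_mul {p q c : ℕ} (h : c < p * q) : 0 < p ∧ 0 < q := by
  constructor
  · rcases Nat.eq_zero_or_pos p with h0 | h0
    · subst h0; simp at h
    · exact h0
  · rcases Nat.eq_zero_or_pos q with h0 | h0
    · subst h0; simp at h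
    · exact h0

lemma merge_lt {p q c i : ℕ} (hc : c < p) (hi : i < q) : c + p * i < p * q := by
  have h1 : c + p * i + 1 ≤ p * (i + 1) := by
    have : p * (i + 1) = p + p * i := by ring
    omega
  have h2 : p * (i + 1) ≤ p * q := Nat.mul_le_mul_left p hi
  omega

/-- Merge equivalence `(c, i) ↦ c + p * i`. -/
def fmergeEquiv (p q : ℕ) : Fin p × Fin q ≃ Fin (p * q) where
  toFun x := ⟨(x.1 : ℕ) + p * (x.2 : ℕ), merge_lt x.1.isLt x.2.isLt⟩
  invFun c :=
    (⟨(c : ℕ) % p, Nat.mod_lt _ (pos_of_lt_mul c.isLt).1⟩,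
     ⟨(c : ℕ) / p, by
        rw [Nat.div_lt_iff_lt_mul (pos_of_lt_mul c.isLt).1]
        exact lt_of_lt_of_le c.isLt (le_of_eq (mul_comm p q))⟩)
  left_inv x := by
    obtain ⟨⟨c, hc⟩, ⟨i, hi⟩⟩ := x
    have hp : 0 < p := by omega
    ext
    · simp only [Nat.add_mul_mod_self_left]
      exact Nat.mod_eq_of_lt hc
    · simp only [Nat.add_mul_div_left _ _ hp]
      rw [Nat.div_eq_of_lt hc]
      simp
  right_inv c := by
    ext
    exact Nat.mod_add_div _ _

lemma fmergeEquiv_val {p q : ℕ} (c : Fin p) (i : Fin q) :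
    ((fmergeEquiv p q (c, i)) : ℕ) = (c : ℕ) + p * (i : ℕ) := rfl

lemma addMul_inj {p a a' b b' : ℕ} (ha : a < p) (ha' : a' < p)
    (h : a + p * b = a' + p * b') : a = a' ∧ b = b' := by
  have h1 : (a + p * b) % p = a := by
    rw [Nat.add_mul_mod_self_left]; exact Nat.mod_eq_of_lt ha
  have h2 : (a' + p * b') % p = a' := by
    rw [Nat.add_mul_mod_self_left]; exact Nat.mod_eq_of_lt ha'
  have h3 : (a + p * b) / p = b := by
    rw [Nat.add_mul_div_left _ _ (by omega), Nat.div_eq_of_lt ha]; omega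
  have h4 : (a' + p * b') / p = b' := by
    rw [Nat.add_mul_div_left _ _ (by omega), Nat.div_eq_of_lt ha']; omega
  rw [h] at h1 h3
  omega

lemma pv_lt {N : ℕ} (I : ℕ → ℕ) (x : (k : Fin N) → Fin (I ((k : ℕ) + 1)))
    {k : ℕ} (hk : k < N) : pv x k < I (k + 1) := by
  unfold pv
  rw [dif_pos hk]
  exact (x ⟨k, hk⟩).isLt

lemma pv_eq {N : ℕ} (I : ℕ → ℕ) (x : (k : Fin N) → Fin (I ((k : ℕ) + 1)))
    {k : ℕ} (hk : k < N) : pv x k = (x ⟨k, hk⟩ : ℕ) := by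
  unfold pv
  rw [dif_pos hk]

lemma codeSingle {N : ℕ} (I : ℕ → ℕ) (x : (k : Fin N) → Fin (I ((k : ℕ) + 1))) (a : ℕ) :
    ttCode I x a (a + 1) = pv x a := by
  unfold ttCode
  rw [Nat.Ico_succ_singleton, Finset.sum_singleton, Finset.Ico_self, Finset.prod_empty,
    mul_one]

lemma codeBound {N : ℕ} (I : ℕ → ℕ) (x : (k : Fin N) → Fin (I ((k : ℕ) + 1)))
    (a : ℕ) : ∀ b : ℕ, b ≤ N → ttCode I x a b < ∏ t ∈ Finset.Ico a b, I (t + 1) := by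
  intro b
  induction b with
  | zero =>
    intro _
    unfold ttCode
    rcases Nat.eq_zero_or_pos a with h | h
    · subst h; simp
    · rw [Finset.Ico_eq_empty (by omega)]; simp
  | succ b ih =>
    intro hbN
    rcases le_or_gt (b + 1) a with hba | hba
    · unfold ttCode
      rw [Finset.Ico_eq_empty (by omega)]; simp
    · have hab : a ≤ b := by omega
      have hsum : ttCode I x a (b + 1)
          = ttCode I x a b + pv x b * ∏ t ∈ Finset.Ico a b, I (t + 1) := by
        unfold ttCode
        rw [Finset.sum_Ico_succ_top hab]
      have hprod : ∏ t ∈ Finset.Ico a (b + 1), I (t + 1)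
          = (∏ t ∈ Finset.Ico a b, I (t + 1)) * I (b + 1) := by
        rw [Finset.prod_Ico_succ_top hab]
      have hb := ih (by omega)
      have hpv : pv x b + 1 ≤ I (b + 1) := pv_lt I x (by omega)
      rw [hsum, hprod]
      calc ttCode I x a b + pv x b * ∏ t ∈ Finset.Ico a b, I (t + 1)
          < (pv x b + 1) * ∏ t ∈ Finset.Ico a b, I (t + 1) := by
            have : (pv x b + 1) * ∏ t ∈ Finset.Ico a b, I (t + 1)
                = (∏ t ∈ Finset.Ico a b, I (t + 1)) + pv x b * ∏ t ∈ Finset.Ico a b, I (t + 1) := by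
              ring
            omega
        _ ≤ I (b + 1) * ∏ t ∈ Finset.Ico a b, I (t + 1) :=
            Nat.mul_le_mul_right _ hpv
        _ = (∏ t ∈ Finset.Ico a b, I (t + 1)) * I (b + 1) := by ring

lemma codeSplit {N : ℕ} (I : ℕ → ℕ) (x : (k : Fin N) → Fin (I ((k : ℕ) + 1)))
    {a b c : ℕ} (hab : a ≤ b) (hbc : b ≤ c) :
    ttCode I x a c = ttCode I x a b + ttCode I x b c * ∏ t ∈ Finset.Ico a b, I (t + 1) := by
  unfold ttCode
  rw [← Finset.sum_Ico_consecutive _ hab hbc]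
  congr 1
  rw [Finset.sum_mul]
  apply Finset.sum_congr rfl
  intro k hk
  have hbk : b ≤ k := (Finset.mem_Ico.mp hk).1
  rw [← Finset.prod_Ico_consecutive _ hab hbk]
  ring

lemma digitsToCode {N : ℕ} (I : ℕ → ℕ) (x : (k : Fin N) → Fin (I ((k : ℕ) + 1))) :
    ∀ (m a c : ℕ),
      (∀ k, a ≤ k → k < a + m → pv x k = (c / ∏ t ∈ Finset.Ico a k, I (t + 1)) % I (k + 1)) →
      c < ∏ t ∈ Finset.Ico a (a + m), I (t + 1) →
      ttCode I x a (a + m) = c := by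
  intro m
  induction m with
  | zero =>
    intro a c _ hc
    rw [Nat.add_zero] at hc ⊢
    rw [Finset.Ico_self, Finset.prod_empty] at hc
    unfold ttCode
    rw [Finset.Ico_self]
    simp
    omega
  | succ m ih =>
    intro a c hdig hc
    have hlt : a < a + (m + 1) := by omega
    have hprod : ∏ t ∈ Finset.Ico a (a + (m + 1)), I (t + 1)
        = I (a + 1) * ∏ t ∈ Finset.Ico (a + 1) (a + (m + 1)), I (t + 1) :=
      Finset.prod_eq_prod_Ico_succ_bot hlt _
    have hIpos : 0 < I (a + 1) := by
      rcases Nat.eq_zero_or_pos (I (a + 1)) with h | h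
      · rw [h, zero_mul] at hprod; omega
      · exact h
    have hsplit := codeSplit I x (le_of_lt (Nat.lt_succ_self a)) (show a + 1 ≤ a + (m + 1) by omega)
    have hsingle : ∏ t ∈ Finset.Ico a (a + 1), I (t + 1) = I (a + 1) := by
      rw [Nat.Ico_succ_singleton, Finset.prod_singleton]
    have hdig0 : pv x a = c % I (a + 1) := by
      have := hdig a le_rfl hlt
      rwa [Finset.Ico_self, Finset.prod_empty, Nat.div_one] at this
    have harg : a + 1 + m = a + (m + 1) := by omega
    have hrec : ttCode I x (a + 1) (a + (m + 1)) = c / I (a + 1) := by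
      rw [← harg]
      apply ih (a + 1) (c / I (a + 1))
      · intro k hk1 hk2
        have hk3 : k < a + (m + 1) := by omega
        have := hdig k (by omega) hk3
        rw [this]
        have hak : a < k := by omega
        have hp2 : ∏ t ∈ Finset.Ico a k, I (t + 1)
            = I (a + 1) * ∏ t ∈ Finset.Ico (a + 1) k, I (t + 1) :=
          Finset.prod_eq_prod_Ico_succ_bot hak _
        rw [hp2, Nat.div_div_eq_div_mul]
      · rw [harg]
        rw [hprod] at hc
        rw [Nat.div_lt_iff_lt_mul hIpos, mul_comm]
        exact hc
    rw [hsplit, codeSingle, hsingle, hdig0, hrec]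
    rw [mul_comm]
    exact Nat.mod_add_div c (I (a + 1))

lemma digitsToCode' {N : ℕ} (I : ℕ → ℕ) (x : (k : Fin N) → Fin (I ((k : ℕ) + 1)))
    {a b c : ℕ} (hab : a ≤ b)
    (hdig : ∀ k, a ≤ k → k < b → pv x k = (c / ∏ t ∈ Finset.Ico a k, I (t + 1)) % I (k + 1))
    (hc : c < ∏ t ∈ Finset.Ico a b, I (t + 1)) :
    ttCode I x a b = c := by
  have heq : a + (b - a) = b := by omega
  have h := digitsToCode I x (b - a) a c
    (fun k hk1 hk2 => hdig k hk1 (by omega)) (by rw [heq]; exact hc)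
  rwa [heq] at h

lemma decode {N : ℕ} (I : ℕ → ℕ) (n : ℕ) (hn : n ≤ N) (c d : ℕ)
    (hc : c < ∏ t ∈ Finset.range n, I (t + 1))
    (hd : d < ∏ t ∈ Finset.Ico n N, I (t + 1)) :
    ∃ x : (k : Fin N) → Fin (I ((k : ℕ) + 1)),
      ttCode I x 0 n = c ∧ ttCode I x n N = d := by
  have hc' : c < ∏ t ∈ Finset.Ico 0 n, I (t + 1) := by
    rwa [← Finset.range_eq_Ico]
  have hIpos1 : ∀ k, k < n → 0 < I (k + 1) := by
    intro k hk
    rcases Nat.eq_zero_or_pos (I (k + 1)) with h | h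
    · exfalso
      have : ∏ t ∈ Finset.Ico 0 n, I (t + 1) = 0 :=
        Finset.prod_eq_zero (Finset.mem_Ico.mpr ⟨Nat.zero_le _, hk⟩) h
      omega
    · exact h
  have hIpos2 : ∀ k, n ≤ k → k < N → 0 < I (k + 1) := by
    intro k hk1 hk2
    rcases Nat.eq_zero_or_pos (I (k + 1)) with h | h
    · exfalso
      have : ∏ t ∈ Finset.Ico n N, I (t + 1) = 0 :=
        Finset.prod_eq_zero (Finset.mem_Ico.mpr ⟨hk1, hk2⟩) h
      omega
    · exact h
  refine ⟨fun k => if h : (k : ℕ) < n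
      then ⟨(c / ∏ t ∈ Finset.Ico 0 (k : ℕ), I (t + 1)) % I ((k : ℕ) + 1),
        Nat.mod_lt _ (hIpos1 _ h)⟩
      else ⟨(d / ∏ t ∈ Finset.Ico n (k : ℕ), I (t + 1)) % I ((k : ℕ) + 1),
        Nat.mod_lt _ (hIpos2 _ (by omega) k.isLt)⟩, ?_, ?_⟩
  · apply digitsToCode' I _ (Nat.zero_le n) ?_ hc'
    intro k hk1 hk2
    have hkN : k < N := by omega
    rw [pv_eq I _ hkN]
    simp only []
    rw [dif_pos (show k < n from by omega)]
  · apply digitsToCode' I _ hn ?_ hd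
    intro k hk1 hk2
    have hkN : k < N := by omega
    rw [pv_eq I _ hkN]
    simp only []
    rw [dif_neg (show ¬ k < n from by omega)]

end TTaux
namespace TTaux
open Matrix Finset

section Main

variable (N : ℕ) (hN : 2 ≤ N) (I r : ℕ → ℕ)

lemma AmatZero (hr0 : r 0 = 1) (hrpos : ∀ n ≤ N, 0 < r n)
    (Q : (n : ℕ) → Matrix (Fin (r (n - 1) * I n)) (Fin (r n)) ℝ)
    (Amat : (n : ℕ) →
      Matrix (Fin (r (n - 1) * I n)) (Fin (∏ t ∈ Finset.Ico n N, I (t + 1))) ℝ)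
    (hrec : ∀ n, 2 ≤ n → n ≤ N - 1 →
      ∀ (s : Fin (r (n - 1))) (i : Fin (I n)) (j : Fin (∏ t ∈ Finset.Ico n N, I (t + 1)))
        (a : Fin (r (n - 1) * I n)) (b : Fin (∏ t ∈ Finset.Ico (n - 1) N, I (t + 1))),
        (a : ℕ) = (s : ℕ) + r (n - 1) * (i : ℕ) →
        (b : ℕ) = (i : ℕ) + I n * (j : ℕ) →
        Amat n a j = ((Q (n - 1))ᵀ * Amat (n - 1)) s b) :
    ∀ n, 1 ≤ n → n ≤ N - 1 → (∏ t ∈ Finset.range n, I (t + 1)) = 0 →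
      ∀ a j, Amat n a j = 0 := by
  intro n hn
  induction n, hn using Nat.le_induction with
  | base =>
    intro _ hp a j
    exfalso
    rw [Finset.prod_range_one] at hp
    have h0 : I 1 = 0 := by simpa using hp
    have h1 : (a : ℕ) < r 0 * I 1 := a.isLt
    have h2 : r 0 * I 1 = 0 := by rw [h0, mul_zero]
    omega
  | succ n hn ih =>
    intro hn1 hp a j
    have hnN : n ≤ N - 1 := by omega
    by_cases hI : I (n + 1) = 0
    · exfalso
      have h1 : (a : ℕ) < r n * I (n + 1) := a.isLt
      have h2 : r n * I (n + 1) = 0 := by rw [hI, mul_zero]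
      omega
    · have hPn : (∏ t ∈ Finset.range n, I (t + 1)) = 0 := by
        rw [Finset.prod_range_succ] at hp
        rcases Nat.mul_eq_zero.mp hp with h | h
        · exact h
        · exact absurd h hI
      have hrn : 0 < r n := hrpos n (by omega)
      have hInpos : 0 < I (n + 1) := Nat.pos_of_ne_zero hI
      have hiA : (a : ℕ) / r n < I (n + 1) := by
        rw [Nat.div_lt_iff_lt_mul hrn]
        exact lt_of_lt_of_le a.isLt (le_of_eq (mul_comm _ _))
      have hbnd : (a : ℕ) / r n + I (n + 1) * (j : ℕ) < ∏ t ∈ Finset.Ico n N, I (t + 1) := by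
        rw [Finset.prod_eq_prod_Ico_succ_bot (show n < N by omega)]
        exact merge_lt hiA j.isLt
      have hL : Amat (n + 1) a j = ((Q n)ᵀ * Amat n) ⟨(a : ℕ) % r n, Nat.mod_lt _ hrn⟩
          (⟨(a : ℕ) / r n + I (n + 1) * (j : ℕ), hbnd⟩
            : Fin (∏ t ∈ Finset.Ico n N, I (t + 1))) :=
        hrec (n + 1) (by omega) hn1 ⟨(a : ℕ) % r n, Nat.mod_lt _ hrn⟩
        ⟨(a : ℕ) / r n, hiA⟩ j a ⟨(a : ℕ) / r n + I (n + 1) * (j : ℕ), hbnd⟩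
        (by simp [Nat.mod_add_div]) rfl
      rw [hL, Matrix.mul_apply]
      apply Finset.sum_eq_zero
      intro k _
      rw [ih hnN hPn k _, mul_zero]

lemma exW (hr0 : r 0 = 1) (hrpos : ∀ n ≤ N, 0 < r n)
    (A : ((k : Fin N) → Fin (I ((k : ℕ) + 1))) → ℝ)
    (Q : (n : ℕ) → Matrix (Fin (r (n - 1) * I n)) (Fin (r n)) ℝ)
    (hQ : ∀ n, 1 ≤ n → n ≤ N - 1 → (Q n)ᵀ * Q n = 1)
    (Amat : (n : ℕ) →
      Matrix (Fin (r (n - 1) * I n)) (Fin (∏ t ∈ Finset.Ico n N, I (t + 1))) ℝ)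
    (hA1 : ∀ (x : (k : Fin N) → Fin (I ((k : ℕ) + 1))) (a : Fin (r 0 * I 1))
      (b : Fin (∏ t ∈ Finset.Ico 1 N, I (t + 1))),
      (a : ℕ) = pv x 0 → (b : ℕ) = ttCode I x 1 N → Amat 1 a b = A x)
    (hrec : ∀ n, 2 ≤ n → n ≤ N - 1 →
      ∀ (s : Fin (r (n - 1))) (i : Fin (I n)) (j : Fin (∏ t ∈ Finset.Ico n N, I (t + 1)))
        (a : Fin (r (n - 1) * I n)) (b : Fin (∏ t ∈ Finset.Ico (n - 1) N, I (t + 1))),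
        (a : ℕ) = (s : ℕ) + r (n - 1) * (i : ℕ) →
        (b : ℕ) = (i : ℕ) + I n * (j : ℕ) →
        Amat n a j = ((Q (n - 1))ᵀ * Amat (n - 1)) s b)
    (Aun : (n : ℕ) →
      Matrix (Fin (∏ t ∈ Finset.range n, I (t + 1)))
        (Fin (∏ t ∈ Finset.Ico n N, I (t + 1))) ℝ)
    (hAun : ∀ n, 1 ≤ n → n ≤ N - 1 →
      ∀ (x : (k : Fin N) → Fin (I ((k : ℕ) + 1)))
        (a : Fin (∏ t ∈ Finset.range n, I (t + 1)))
        (b : Fin (∏ t ∈ Finset.Ico n N, I (t + 1))),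
        (a : ℕ) = ttCode I x 0 n → (b : ℕ) = ttCode I x n N → Aun n a b = A x) :
    ∀ n, 1 ≤ n → n ≤ N - 1 → (∏ t ∈ Finset.range n, I (t + 1)) ≠ 0 →
      ∃ W : Matrix (Fin (r (n - 1) * I n)) (Fin (∏ t ∈ Finset.range n, I (t + 1))) ℝ,
        W * Wᵀ = 1 ∧ Amat n = W * Aun n := by
  intro n hn
  induction n, hn using Nat.le_induction with
  | base =>
    intro h1N _
    have ha : ∀ a : Fin (r 0 * I 1), (a : ℕ) < ∏ t ∈ Finset.range 1, I (t + 1) := by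
      intro a
      have h := a.isLt
      have hre : r 0 * I 1 = I 1 := by rw [hr0, one_mul]
      have hprod : (∏ t ∈ Finset.range 1, I (t + 1)) = I 1 := by
        simpa using Finset.prod_range_one (f := fun t => I (t + 1))
      omega
    have hsum : ∀ (a : Fin (r 0 * I 1)) (F : Fin (∏ t ∈ Finset.range 1, I (t + 1)) → ℝ),
        (∑ c : Fin (∏ t ∈ Finset.range 1, I (t + 1)), (if (a : ℕ) = (c : ℕ) then (1 : ℝ) else 0) * F c) = F ⟨(a : ℕ), ha a⟩ := by
      intro a F
      rw [Finset.sum_eq_single (⟨(a : ℕ), ha a⟩ : Fin _)]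
      · rw [if_pos rfl, one_mul]
      · intro c _ hc
        rw [if_neg, zero_mul]
        intro h
        exact hc (Fin.ext h.symm)
      · intro h
        exact absurd (Finset.mem_univ _) h
    refine ⟨Matrix.of fun a c => if (a : ℕ) = (c : ℕ) then 1 else 0, ?_, ?_⟩
    · ext a a'
      simp only [Matrix.mul_apply, Matrix.transpose_apply, Matrix.of_apply]
      rw [hsum a (fun c => if (a' : ℕ) = (c : ℕ) then (1 : ℝ) else 0)]
      rw [Matrix.one_apply]
      by_cases h : a = a'
      · subst h; rw [if_pos rfl, if_pos rfl]
      · rw [if_neg h, if_neg]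
        intro hv
        exact h (Fin.ext hv.symm)
    · ext a b
      simp only [Matrix.mul_apply, Matrix.of_apply]
      rw [hsum a (fun c => Aun 1 c b)]
      obtain ⟨x, hx0, hx1⟩ := decode I 1 (by omega) (a : ℕ) (b : ℕ) (ha a) b.isLt
      have hpv : pv x 0 = (a : ℕ) := by
        rw [← hx0]
        exact (codeSingle I x 0).symm
      rw [hA1 x a b hpv.symm hx1.symm]
      rw [hAun 1 le_rfl h1N x ⟨(a : ℕ), ha a⟩ b hx0.symm hx1.symm]
  | succ n hn ih =>
    intro hn1 hPn1
    have hnN : n ≤ N - 1 := by omega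
    have hsplitP : (∏ t ∈ Finset.range (n + 1), I (t + 1))
        = (∏ t ∈ Finset.range n, I (t + 1)) * I (n + 1) := Finset.prod_range_succ _ n
    have hPn : (∏ t ∈ Finset.range n, I (t + 1)) ≠ 0 := by
      intro h; exact hPn1 (by rw [hsplitP, h, zero_mul])
    have hIn1 : I (n + 1) ≠ 0 := by
      intro h; exact hPn1 (by rw [hsplitP, h, mul_zero])
    have hInpos : 0 < I (n + 1) := Nat.pos_of_ne_zero hIn1
    have hrn : 0 < r n := hrpos n (by omega)
    set P := ∏ t ∈ Finset.range n, I (t + 1) with hPdef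
    obtain ⟨W', hW'o, hW'e⟩ := ih hnN hPn
    have hPpos : 0 < P := Nat.pos_of_ne_zero hPn
    set M := (Q n)ᵀ * W' with hMdef
    have hQn := hQ n (by omega) hnN
    have hMo : M * Mᵀ = 1 := by
      rw [hMdef, Matrix.transpose_mul, Matrix.transpose_transpose]
      calc (Q n)ᵀ * W' * (W'ᵀ * Q n) = (Q n)ᵀ * (W' * W'ᵀ) * Q n := by
            simp only [Matrix.mul_assoc]
        _ = (Q n)ᵀ * Q n := by rw [hW'o, Matrix.mul_one]
        _ = 1 := hQn
    have hceq : P * I (n + 1) = ∏ t ∈ Finset.range (n + 1), I (t + 1) := hsplitP.symm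
    set E : Fin P × Fin (I (n + 1)) ≃ Fin (∏ t ∈ Finset.range (n + 1), I (t + 1)) :=
      (fmergeEquiv P (I (n + 1))).trans (finCongr hceq) with hEdef
    have hEval : ∀ (c' : Fin P) (i' : Fin (I (n + 1))),
        ((E (c', i')) : ℕ) = (c' : ℕ) + P * (i' : ℕ) := fun _ _ => rfl
    have hiA : ∀ a : Fin (r n * I (n + 1)), (a : ℕ) / r n < I (n + 1) := by
      intro a
      rw [Nat.div_lt_iff_lt_mul hrn]
      exact lt_of_lt_of_le a.isLt (le_of_eq (mul_comm _ _))
    set W : Matrix (Fin (r n * I (n + 1))) (Fin (∏ t ∈ Finset.range (n + 1), I (t + 1))) ℝ :=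
      Matrix.of fun a c => if (E.symm c).2 = (⟨(a : ℕ) / r n, hiA a⟩ : Fin (I (n + 1)))
        then M ⟨(a : ℕ) % r n, Nat.mod_lt _ hrn⟩ (E.symm c).1 else 0 with hWdef
    have hinner : ∀ (A B : ℝ) (u v : Fin (I (n + 1))),
        (∑ i' : Fin (I (n + 1)), (if i' = u then A else 0) * (if i' = v then B else 0))
          = if u = v then A * B else 0 := by
      intro A B u v
      by_cases huv : u = v
      · subst huv
        rw [if_pos rfl, Finset.sum_eq_single u]
        · rw [if_pos rfl, if_pos rfl]
        · intro i' _ hi'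
          rw [if_neg hi', zero_mul]
        · intro h; exact absurd (Finset.mem_univ _) h
      · rw [if_neg huv]
        apply Finset.sum_eq_zero
        intro i' _
        by_cases h1 : i' = u
        · subst h1
          rw [if_neg huv, mul_zero]
        · rw [if_neg h1, zero_mul]
    refine ⟨W, ?_, ?_⟩
    · ext a a'
      rw [Matrix.mul_apply]
      rw [← Equiv.sum_comp E (fun c => W a c * Wᵀ c a')]
      rw [Fintype.sum_prod_type]
      simp only [Matrix.transpose_apply, hWdef, Matrix.of_apply, Equiv.symm_apply_apply]
      have hstep : ∀ c' : Fin P,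
          (∑ i' : Fin (I (n + 1)),
            (if i' = (⟨(a : ℕ) / r n, hiA a⟩ : Fin (I (n + 1)))
              then M ⟨(a : ℕ) % r n, Nat.mod_lt _ hrn⟩ c' else 0) *
            (if i' = (⟨(a' : ℕ) / r n, hiA a'⟩ : Fin (I (n + 1)))
              then M ⟨(a' : ℕ) % r n, Nat.mod_lt _ hrn⟩ c' else 0))
          = if (⟨(a : ℕ) / r n, hiA a⟩ : Fin (I (n + 1)))
              = (⟨(a' : ℕ) / r n, hiA a'⟩ : Fin (I (n + 1)))
            then M ⟨(a : ℕ) % r n, Nat.mod_lt _ hrn⟩ c'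
              * M ⟨(a' : ℕ) % r n, Nat.mod_lt _ hrn⟩ c' else 0 :=
        fun c' => hinner _ _ _ _
      rw [Finset.sum_congr rfl (fun c' _ => hstep c')]
      by_cases hii : (⟨(a : ℕ) / r n, hiA a⟩ : Fin (I (n + 1)))
          = (⟨(a' : ℕ) / r n, hiA a'⟩ : Fin (I (n + 1)))
      · simp only [if_pos hii]
        have hMM : (∑ c' : Fin P, M ⟨(a : ℕ) % r n, Nat.mod_lt _ hrn⟩ c'
            * M ⟨(a' : ℕ) % r n, Nat.mod_lt _ hrn⟩ c')
            = (M * Mᵀ) ⟨(a : ℕ) % r n, Nat.mod_lt _ hrn⟩ ⟨(a' : ℕ) % r n, Nat.mod_lt _ hrn⟩ := by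
          rw [Matrix.mul_apply]
          simp only [Matrix.transpose_apply]
          rfl
        rw [hMM, hMo]
        have hdivs : (a : ℕ) / r n = (a' : ℕ) / r n := congrArg Fin.val hii
        by_cases hss : ((a : ℕ) % r n) = ((a' : ℕ) % r n)
        · have haa : a = a' := by
            apply Fin.ext
            rw [← Nat.mod_add_div (a : ℕ) (r n), hss, hdivs]
            exact Nat.mod_add_div _ _
          subst haa
          rw [Matrix.one_apply_eq, Matrix.one_apply_eq]
        · have haa : a ≠ a' := by
            intro h; subst h; exact hss rfl
          rw [Matrix.one_apply_ne haa, Matrix.one_apply_ne]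
          intro h
          exact hss (by simpa using congrArg Fin.val h)
      · rw [Finset.sum_eq_zero (fun c' _ => if_neg hii)]
        have haa : a ≠ a' := by
          intro h; subst h; exact hii rfl
        rw [Matrix.one_apply_ne haa]
    · ext a j
      have hbnd : (a : ℕ) / r n + I (n + 1) * (j : ℕ) < ∏ t ∈ Finset.Ico n N,
          I (t + 1) := by
        rw [Finset.prod_eq_prod_Ico_succ_bot (show n < N by omega)]
        exact merge_lt (hiA a) j.isLt
      set b : Fin (∏ t ∈ Finset.Ico n N, I (t + 1)) :=
        ⟨(a : ℕ) / r n + I (n + 1) * (j : ℕ), hbnd⟩ with hbdef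
      have hL := hrec (n + 1) (by omega) hn1 ⟨(a : ℕ) % r n, Nat.mod_lt _ hrn⟩
        ⟨(a : ℕ) / r n, hiA a⟩ j a b (by simp [Nat.mod_add_div]) rfl
      -- compatibility of the two unfoldings
      have hcompat : ∀ c' : Fin P,
          Aun (n + 1) (E (c', ⟨(a : ℕ) / r n, hiA a⟩)) j = Aun n c' b := by
        intro c'
        obtain ⟨x, hx0, hx1⟩ := decode I (n + 1) (by omega)
          ((E (c', ⟨(a : ℕ) / r n, hiA a⟩)) : ℕ) (j : ℕ)
          (E (c', ⟨(a : ℕ) / r n, hiA a⟩)).isLt j.isLt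
        have e1 : Aun (n + 1) (E (c', ⟨(a : ℕ) / r n, hiA a⟩)) j = A x :=
          hAun (n + 1) (by omega) hn1 x _ j hx0.symm hx1.symm
        have hprod0 : ∏ t ∈ Finset.Ico 0 n, I (t + 1) = P := by
          rw [hPdef, Finset.range_eq_Ico]
        have hsplit0 : ttCode I x 0 (n + 1)
            = ttCode I x 0 n + pv x n * P := by
          rw [codeSplit I x (Nat.zero_le n) (Nat.le_succ n), codeSingle, hprod0]
        have hbound0 : ttCode I x 0 n < P := by
          rw [← hprod0]
          exact codeBound I x 0 n (by omega)
        have hkey : ttCode I x 0 n + P * pv x n = (c' : ℕ) + P * ((a : ℕ) / r n) := by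
          have h1 : ttCode I x 0 n + pv x n * P = (c' : ℕ) + P * ((a : ℕ) / r n) := by
            have h0 := hx0
            rw [hsplit0] at h0
            exact h0
          have hcomm : pv x n * P = P * pv x n := mul_comm _ _
          omega
        obtain ⟨hc'eq, hpvn⟩ := addMul_inj hbound0 c'.isLt hkey
        have e2 : Aun n c' b = A x := by
          apply hAun n (by omega) hnN x c' b hc'eq.symm
          have hsplitn : ttCode I x n N
              = pv x n + ttCode I x (n + 1) N * I (n + 1) := by
            rw [codeSplit I x (Nat.le_succ n) (show n + 1 ≤ N by omega), codeSingle]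
            congr 1
            rw [Nat.Ico_succ_singleton, Finset.prod_singleton]
          rw [hsplitn, hx1, hbdef]
          simp only []
          rw [hpvn]
          ring
        rw [e1, e2]
      calc Amat (n + 1) a j
          = ((Q n)ᵀ * Amat n) ⟨(a : ℕ) % r n, Nat.mod_lt _ hrn⟩ b := hL
        _ = (M * Aun n) ⟨(a : ℕ) % r n, Nat.mod_lt _ hrn⟩ b := by
            rw [hMdef, Matrix.mul_assoc, ← hW'e]
        _ = ∑ c' : Fin P, M ⟨(a : ℕ) % r n, Nat.mod_lt _ hrn⟩ c' * Aun n c' b :=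
            Matrix.mul_apply
        _ = (W * Aun (n + 1)) a j := by
            rw [Matrix.mul_apply]
            rw [← Equiv.sum_comp E (fun c => W a c * Aun (n + 1) c j)]
            rw [Fintype.sum_prod_type]
            simp only [hWdef, Matrix.of_apply, Equiv.symm_apply_apply, ite_mul, zero_mul]
            rw [Finset.sum_comm]
            rw [Finset.sum_eq_single (⟨(a : ℕ) / r n, hiA a⟩ : Fin (I (n + 1)))]
            · apply Finset.sum_congr rfl
              intro c' _
              rw [if_pos rfl, hcompat c']
            · intro i' _ hi'
              apply Finset.sum_eq_zero
              intro c' _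
              rw [if_neg hi']
            · intro h; exact absurd (Finset.mem_univ _) h
  end Main
end TTaux
/-- The singular-value tails of `A_n` are dominated by those of the
unfolding `A_{([n])}`:  `Σ_{i>μ} σ_i(A_n)² ≤ Σ_{i>μ} σ_i(A_{([n])})², i.e.
`Δ_{μ+1}(A_n) ≤ Δ_{μ+1}(A_{([n])})`. -/
theorem tt_tail_le_unfolding_tail
    (N : ℕ) (hN : 2 ≤ N)
    -- dimensions `I 1, …, I N` and TT-ranks `r 0 = μ₀ = 1, r 1 = μ₁, …, r N = μ_N = 1`
    (I r : ℕ → ℕ) (hr0 : r 0 = 1) (hrN : r N = 1) (hrpos : ∀ n ≤ N, 0 < r n)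
    -- the tensor `A ∈ ℝ^{I₁ × ⋯ × I_N}` (0-based component `k` is the paper index `i_{k+1}`)
    (A : ((k : Fin N) → Fin (I ((k : ℕ) + 1))) → ℝ)
    -- the orthonormal matrices `Q n ∈ ℝ^{μ_{n-1} I_n × μ_n}` for `n = 1, …, N-1`
    (Q : (n : ℕ) → Matrix (Fin (r (n - 1) * I n)) (Fin (r n)) ℝ)
    (hQ : ∀ n, 1 ≤ n → n ≤ N - 1 → (Q n)ᵀ * Q n = 1)
    -- the matrices `A_n ∈ ℝ^{μ_{n-1} I_n × (I_{n+1} ⋯ I_N)}` for `n = 1, …, N-1`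
    (Amat : (n : ℕ) →
      Matrix (Fin (r (n - 1) * I n)) (Fin (∏ t ∈ Finset.Ico n N, I (t + 1))) ℝ)
    -- `A₁` is the first unfolding `A_{([1])}` of `A`
    (hA1 : ∀ (x : (k : Fin N) → Fin (I ((k : ℕ) + 1))) (a : Fin (r 0 * I 1))
      (b : Fin (∏ t ∈ Finset.Ico 1 N, I (t + 1))),
      (a : ℕ) = pv x 0 → (b : ℕ) = ttCode I x 1 N → Amat 1 a b = A x)
    -- for `n = 2, …, N-1`, `A_n` is the reshaping of `Q_{n-1}ᵀ A_{n-1}` merging the row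
    -- index with the `I_n` index:  `A_n(s + μ_{n-1} i, j) = (Q_{n-1}ᵀ A_{n-1})(s, i + I_n j)`
    (hrec : ∀ n, 2 ≤ n → n ≤ N - 1 →
      ∀ (s : Fin (r (n - 1))) (i : Fin (I n)) (j : Fin (∏ t ∈ Finset.Ico n N, I (t + 1)))
        (a : Fin (r (n - 1) * I n)) (b : Fin (∏ t ∈ Finset.Ico (n - 1) N, I (t + 1))),
        (a : ℕ) = (s : ℕ) + r (n - 1) * (i : ℕ) →
        (b : ℕ) = (i : ℕ) + I n * (j : ℕ) →
        Amat n a j = ((Q (n - 1))ᵀ * Amat (n - 1)) s b)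
    -- the unfoldings `A_{([n])} ∈ ℝ^{(I₁⋯I_n) × (I_{n+1}⋯I_N)}` of `A`
    (Aun : (n : ℕ) →
      Matrix (Fin (∏ t ∈ Finset.range n, I (t + 1))) (Fin (∏ t ∈ Finset.Ico n N, I (t + 1))) ℝ)
    (hAun : ∀ n, 1 ≤ n → n ≤ N - 1 →
      ∀ (x : (k : Fin N) → Fin (I ((k : ℕ) + 1)))
        (a : Fin (∏ t ∈ Finset.range n, I (t + 1)))
        (b : Fin (∏ t ∈ Finset.Ico n N, I (t + 1))),
        (a : ℕ) = ttCode I x 0 n → (b : ℕ) = ttCode I x n N → Aun n a b = A x) :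
    ∀ n, 1 ≤ n → n ≤ N - 1 → ∀ μ : ℕ,
      (∑ i ∈ Finset.Ico μ (min (r (n - 1) * I n) (∏ t ∈ Finset.Ico n N, I (t + 1))),
          sval (Amat n) i ^ 2) ≤
        (∑ i ∈ Finset.Ico μ
            (min (∏ t ∈ Finset.range n, I (t + 1)) (∏ t ∈ Finset.Ico n N, I (t + 1))),
          sval (Aun n) i ^ 2) ∧
      tailDelta (Amat n) μ ≤ tailDelta (Aun n) μ := by
  intro n hn1 hn2 μ
  have key : (∑ i ∈ Finset.Ico μ (min (r (n - 1) * I n) (∏ t ∈ Finset.Ico n N, I (t + 1))),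
          sval (Amat n) i ^ 2) ≤
        (∑ i ∈ Finset.Ico μ
            (min (∏ t ∈ Finset.range n, I (t + 1)) (∏ t ∈ Finset.Ico n N, I (t + 1))),
          sval (Aun n) i ^ 2) := by
    by_cases hp : (∏ t ∈ Finset.range n, I (t + 1)) = 0
    · have hz := TTaux.AmatZero N I r hr0 hrpos Q Amat hrec n hn1 hn2 hp
      have hAmat0 : Amat n = 0 := by
        ext a j
        rw [hz a j, Matrix.zero_apply]
      calc (∑ i ∈ Finset.Ico μ (min (r (n - 1) * I n) (∏ t ∈ Finset.Ico n N, I (t + 1))),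
            sval (Amat n) i ^ 2)
          = 0 := by
            apply Finset.sum_eq_zero
            intro i _
            rw [TTaux.sval_zero_mat (Amat n) hAmat0 i]
            ring
        _ ≤ _ := Finset.sum_nonneg (fun i _ => sq_nonneg _)
    · obtain ⟨W, hWo, hWe⟩ := TTaux.exW N I r hr0 hrpos A Q hQ Amat hA1 hrec Aun hAun
        n hn1 hn2 hp
      exact TTaux.tail_le (Amat n) (Aun n) W hWo hWe μ
  refine ⟨key, ?_⟩
  unfold tailDelta
  exact Real.sqrt_le_sqrt key
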